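/- arXiv:1106.5092 — 3 statements merged into one kernel-verified Lean document; each statement's English description precedes it below -/
import Mathlib

section
/- Assume the C*-textile dynamical system forms squares, i.e., the closed *-subalgebra of A generated by {ρ_α(1) : α ∈ Σ^ρ} coincides with the closed *-subalgebra of A generated by {η_a(1) : a ∈ Σ^η}. Then for every l ≥ 1, the closed *-subalgebra A_l^ρ of A generated by {ρ_μ(1) : μ a word of length l over Σ^ρ} coincides with the closed *-subalgebra A_l^η of A generated by {η_ξ(1) : ξ a word of length l over Σ^η}. -/
open scoped Classical

variable (A : Type*) [NormedRing A] [StarRing A] [CStarRing A] [CompleteSpace A]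
  [NormedAlgebra ℂ A] [StarModule ℂ A] [PartialOrder A] [StarOrderedRing A]

/-- A `C*`-symbolic dynamical system `(A, ρ, S)`: a finite family of (central, essential,
faithful) `*`-endomorphisms of a unital `C*`-algebra `A` indexed by a finite alphabet `S`. -/
structure CSDS (S : Type*) [Fintype S] where
  ρ : S → A →⋆ₙₐ[ℂ] A
  unit_ne_zero : ∀ α, ρ α 1 ≠ 0
  central : ∀ α, ∀ x ∈ Set.center A, ρ α x ∈ Set.center A
  essential : 1 ≤ ∑ α, ρ α 1
  faithful : ∀ x : A, x ≠ 0 → ∃ α, ρ α x ≠ 0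

/-- A `C*`-textile dynamical system `(A, ρ, η, Σ^ρ, Σ^η, κ)`. -/
structure CTDS (Sρ Sη : Type*) [Fintype Sρ] [Fintype Sη] where
  rs : CSDS A Sρ
  es : CSDS A Sη
  κ : {p : Sρ × Sη // ∃ x, es.ρ p.2 (rs.ρ p.1 x) ≠ 0} →
      {q : Sη × Sρ // ∃ x, rs.ρ q.2 (es.ρ q.1 x) ≠ 0}
  κ_bij : Function.Bijective κ
  commrel : ∀ p, ∀ x, es.ρ p.1.2 (rs.ρ p.1.1 x) = rs.ρ (κ p).1.2 (es.ρ (κ p).1.1 x)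

variable {A}
variable {Sρ Sη : Type*} [Fintype Sρ] [Fintype Sη]

namespace CTDS

/-- The alphabet `Σ_κ` of the textile system: pairs `(α, b) ∈ Σ^{ρη}`,
identified with quadruples `(α, b, a, β)` with `κ(α,b) = (a,β)`. -/
abbrev SigmaKappa (T : CTDS A Sρ Sη) : Type _ :=
  {p : Sρ × Sη // ∃ x, T.es.ρ p.2 (T.rs.ρ p.1 x) ≠ 0}

variable (T : CTDS A Sρ Sη)


noncomputable instance (T : CTDS A Sρ Sη) : Fintype T.SigmaKappa := Fintype.ofFinite _

end CTDS

/-- `ρ_μ = ρ_{μ_j} ∘ ⋯ ∘ ρ_{μ_1}` applied to `x`. -/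
noncomputable def rhoW (T : CTDS A Sρ Sη) (μ : List Sρ) (x : A) : A :=
  μ.foldl (fun y α => T.rs.ρ α y) x

/-- `η_ζ = η_{ζ_k} ∘ ⋯ ∘ η_{ζ_1}` applied to `x`. -/
noncomputable def etaW (T : CTDS A Sρ Sη) (ζ : List Sη) (x : A) : A :=
  ζ.foldl (fun y a => T.es.ρ a y) x

/-- The closed `*`-subalgebra `A_l^ρ` of `A` generated by `{ρ_μ(1) : μ ∈ B_l(Λ_ρ)}`. -/
noncomputable def ALrho (T : CTDS A Sρ Sη) (l : ℕ) : StarSubalgebra ℂ A :=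
  (StarAlgebra.adjoin ℂ
    {x : A | ∃ μ : Fin l → Sρ, x = rhoW T (List.ofFn μ) 1}).topologicalClosure

/-- The closed `*`-subalgebra `A_l^η` of `A` generated by `{η_ξ(1) : ξ ∈ B_l(Λ_η)}`. -/
noncomputable def ALeta (T : CTDS A Sρ Sη) (l : ℕ) : StarSubalgebra ℂ A :=
  (StarAlgebra.adjoin ℂ
    {x : A | ∃ ξ : Fin l → Sη, x = etaW T (List.ofFn ξ) 1}).topologicalClosure

/-! ### Auxiliary machinery -/

noncomputable local instance instCStarAlgebraOfComponents : CStarAlgebra A :=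
  { ‹NormedRing A›, ‹StarRing A›, ‹CStarRing A›, ‹CompleteSpace A›,
    ‹NormedAlgebra ℂ A›, ‹StarModule ℂ A› with }

namespace CTDSAux

/-- Fold of a family of star homomorphisms, as a star homomorphism. -/
noncomputable def wordHom {S : Type*} (ρ : S → A →⋆ₙₐ[ℂ] A) (L : List S) : A →⋆ₙₐ[ℂ] A :=
  L.foldl (fun f a => (ρ a).comp f) (NonUnitalStarAlgHom.id ℂ A)

lemma foldl_comp_apply {S : Type*} (ρ : S → A →⋆ₙₐ[ℂ] A) :
    ∀ (L : List S) (f : A →⋆ₙₐ[ℂ] A) (x : A),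
      (L.foldl (fun g a => (ρ a).comp g) f) x = L.foldl (fun y a => ρ a y) (f x)
  | [], _, _ => rfl
  | a :: t, f, x => by
    rw [List.foldl_cons, List.foldl_cons, foldl_comp_apply ρ t]
    rfl

lemma wordHom_apply {S : Type*} (ρ : S → A →⋆ₙₐ[ℂ] A) (L : List S) (x : A) :
    wordHom ρ L x = L.foldl (fun y a => ρ a y) x :=
  foldl_comp_apply ρ L _ x

variable {Sρ Sη : Type*} [Fintype Sρ] [Fintype Sη]

/-- `etaW` as a bundled star homomorphism. -/
noncomputable def etaH (T : CTDS A Sρ Sη) (L : List Sη) : A →⋆ₙₐ[ℂ] A := wordHom T.es.ρ L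

/-- `rhoW` as a bundled star homomorphism. -/
noncomputable def rhoH (T : CTDS A Sρ Sη) (L : List Sρ) : A →⋆ₙₐ[ℂ] A := wordHom T.rs.ρ L

lemma etaH_apply (T : CTDS A Sρ Sη) (L : List Sη) (x : A) : etaH T L x = etaW T L x :=
  wordHom_apply _ _ _

lemma rhoH_apply (T : CTDS A Sρ Sη) (L : List Sρ) (x : A) : rhoH T L x = rhoW T L x :=
  wordHom_apply _ _ _

lemma etaW_cons (T : CTDS A Sρ Sη) (a : Sη) (L : List Sη) (x : A) :
    etaW T (a :: L) x = etaW T L (T.es.ρ a x) := rfl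

lemma rhoW_cons (T : CTDS A Sρ Sη) (α : Sρ) (L : List Sρ) (x : A) :
    rhoW T (α :: L) x = rhoW T L (T.rs.ρ α x) := rfl

lemma etaW_append (T : CTDS A Sρ Sη) (L₁ L₂ : List Sη) (x : A) :
    etaW T (L₁ ++ L₂) x = etaW T L₂ (etaW T L₁ x) :=
  List.foldl_append

/-- A star homomorphism is positive. -/
lemma map_nonneg_of_nonneg (f : A →⋆ₙₐ[ℂ] A) {x : A} (hx : 0 ≤ x) : 0 ≤ f x := by
  rw [StarOrderedRing.nonneg_iff] at hx ⊢
  induction hx using AddSubmonoid.closure_induction with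
  | mem y hy =>
    obtain ⟨s, rfl⟩ := hy
    exact AddSubmonoid.subset_closure ⟨f s, by simp [map_star]⟩
  | zero => simpa using AddSubmonoid.zero_mem _
  | add x y _ _ hx' hy' => simpa [map_add] using AddSubmonoid.add_mem _ hx' hy'

/-- A star homomorphism is monotone. -/
lemma map_le_map (f : A →⋆ₙₐ[ℂ] A) {x y : A} (h : x ≤ y) : f x ≤ f y := by
  rw [← sub_nonneg] at h ⊢
  simpa [map_sub] using map_nonneg_of_nonneg f h

lemma nusah_continuous (φ : A →⋆ₙₐ[ℂ] A) : Continuous φ :=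
  AddMonoidHomClass.continuous_of_bound φ 1 fun x => by
    simpa [one_mul] using NonUnitalStarAlgHom.norm_apply_le φ x

lemma star_algebraMap_real (r : ℝ) : star (algebraMap ℝ A r) = algebraMap ℝ A r := by
  rw [IsScalarTower.algebraMap_apply ℝ ℂ A, ← algebraMap_star_comm]
  norm_num

lemma one_nonneg : (0 : A) ≤ 1 := by
  simpa using star_mul_self_nonneg (1 : A)

lemma algebraMap_nonneg' {r : ℝ} (hr : 0 ≤ r) : (0 : A) ≤ algebraMap ℝ A r := by
  have h1 : algebraMap ℝ A r
      = star (algebraMap ℝ A (Real.sqrt r)) * algebraMap ℝ A (Real.sqrt r) := by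
    rw [star_algebraMap_real, ← map_mul, Real.mul_self_sqrt hr]
  rw [h1]
  exact star_mul_self_nonneg _

lemma algebraMap_le_algebraMap {r t : ℝ} (h : r ≤ t) :
    algebraMap ℝ A r ≤ algebraMap ℝ A t := by
  rw [← sub_nonneg, ← map_sub]
  exact algebraMap_nonneg' (by linarith)

lemma algebraMap_mul_nonneg {r : ℝ} (hr : 0 ≤ r) {x : A} (hx : 0 ≤ x) :
    0 ≤ algebraMap ℝ A r * x := by
  have key : algebraMap ℝ A r * x
      = star (algebraMap ℝ A (Real.sqrt r)) * x * algebraMap ℝ A (Real.sqrt r) := by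
    rw [star_algebraMap_real]
    rw [Algebra.commutes (Real.sqrt r) x, mul_assoc, ← map_mul, Real.mul_self_sqrt hr,
      ← Algebra.commutes r x]
  rw [key]
  exact star_left_conjugate_nonneg hx _

lemma algebraMap_mul_le_mul {r : ℝ} (hr : 0 ≤ r) {x y : A} (h : x ≤ y) :
    algebraMap ℝ A r * x ≤ algebraMap ℝ A r * y := by
  rw [← sub_nonneg, ← mul_sub]
  exact algebraMap_mul_nonneg hr (sub_nonneg.2 h)

/-- The key "corner" lemma: if `p` is a projection, `s ∈ S` with
`p ≤ s`, `p s = s p = s`, and `S` is a closed star subalgebra, then `p ∈ S`. -/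
lemma corner_mem {S : StarSubalgebra ℂ A} (hS : IsClosed (S : Set A)) {p s : A}
    (hp2 : p * p = p) (hpst : star p = p) (hps : p * s = s) (hsp : s * p = s)
    (hple : p ≤ s) (hsmem : s ∈ S) : p ∈ S := by
  by_cases hp0 : p = 0
  · simpa [hp0] using zero_mem S
  have : Nontrivial A := nontrivial_of_ne p 0 hp0
  have hpnn : 0 ≤ p := by
    have := star_mul_self_nonneg p
    rwa [hpst, hp2] at this
  have hsnn : 0 ≤ s := hpnn.trans hple
  have hssa : IsSelfAdjoint s := IsSelfAdjoint.of_nonneg hsnn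
  set M : ℝ := ‖s‖ + 1 with hM
  have hM1 : (1:ℝ) ≤ M := by have := norm_nonneg s; rw [hM]; linarith
  have hM0 : (0:ℝ) < M := lt_of_lt_of_le one_pos hM1
  have hMinv0 : (0:ℝ) ≤ M⁻¹ := le_of_lt (inv_pos.2 hM0)
  -- `s ≤ M • p` (as `algebraMap ℝ A M * p`)
  have hsM1 : s ≤ algebraMap ℝ A M := by
    refine le_trans hssa.le_algebraMap_norm_self (algebraMap_le_algebraMap ?_)
    simp [hM]
  have hsMp : s ≤ algebraMap ℝ A M * p := by
    have hconj := star_left_conjugate_le_conjugate hsM1 p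
    rw [hpst] at hconj
    have h1 : p * s * p = s := by rw [hps, hsp]
    have h2 : p * algebraMap ℝ A M * p = algebraMap ℝ A M * p := by
      rw [← Algebra.commutes M p, mul_assoc, hp2]
    rwa [h1, h2] at hconj
  set z : A := algebraMap ℝ A M⁻¹ * s with hz
  have hzmem : z ∈ S := by
    refine mul_mem ?_ hsmem
    rw [IsScalarTower.algebraMap_apply ℝ ℂ A]
    exact algebraMap_mem S _
  have hz_le_p : z ≤ p := by
    have := algebraMap_mul_le_mul hMinv0 hsMp
    rwa [← mul_assoc, ← map_mul, inv_mul_cancel₀ (ne_of_gt hM0), map_one, one_mul] at this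
  have hp_le_one : p ≤ 1 := by
    have hq : (1 - p) * (1 - p) = 1 - p := by
      have h' : (1 - p) * (1 - p) = 1 - p - p + p * p := by noncomm_ring
      rw [h', hp2]; abel
    have h0 := star_mul_self_nonneg (1 - p)
    rw [star_sub, star_one, hpst, hq] at h0
    exact sub_nonneg.mp h0
  have hMinvp_le_z : algebraMap ℝ A M⁻¹ * p ≤ z := algebraMap_mul_le_mul hMinv0 hple
  set y : A := p - z with hy
  have hynn : 0 ≤ y := sub_nonneg.2 hz_le_p
  have hy_le : y ≤ algebraMap ℝ A (1 - M⁻¹) := by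
    have h1 : y ≤ p - algebraMap ℝ A M⁻¹ * p := by
      rw [hy]; exact sub_le_sub_left hMinvp_le_z p
    have h2 : p - algebraMap ℝ A M⁻¹ * p = algebraMap ℝ A (1 - M⁻¹) * p := by
      rw [map_sub, map_one, sub_mul, one_mul]
    have h3 : algebraMap ℝ A (1 - M⁻¹) * p ≤ algebraMap ℝ A (1 - M⁻¹) * 1 := by
      refine algebraMap_mul_le_mul ?_ hp_le_one
      have : M⁻¹ ≤ 1 := by
        rw [inv_le_one_iff₀]; right; linarith
      linarith
    calc y ≤ p - algebraMap ℝ A M⁻¹ * p := h1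
      _ = algebraMap ℝ A (1 - M⁻¹) * p := h2
      _ ≤ algebraMap ℝ A (1 - M⁻¹) * 1 := h3
      _ = algebraMap ℝ A (1 - M⁻¹) := mul_one _
  set c : ℝ := 1 - M⁻¹ with hc
  have hc0 : 0 ≤ c := by
    have : M⁻¹ ≤ 1 := by rw [inv_le_one_iff₀]; right; linarith
    simp [hc]; linarith
  have hc1 : c < 1 := by
    have : 0 < M⁻¹ := inv_pos.2 hM0
    simp [hc]; linarith
  have hynorm : ‖y‖ ≤ c := by
    have := CStarAlgebra.norm_le_norm_of_nonneg_of_le hynn hy_le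
    rwa [norm_algebraMap', Real.norm_of_nonneg hc0] at this
  -- commutation facts for `z`
  have hpz : p * z = z := by
    rw [hz, ← mul_assoc, ← Algebra.commutes M⁻¹ p, mul_assoc, hps]
  have hzp : z * p = z := by rw [hz, mul_assoc, hsp]
  -- the approximating sequence
  have hseq : ∀ n : ℕ, ∃ w ∈ S, w * p = w ∧ p * w = w ∧ (p - z) ^ (n + 1) = p - w := by
    intro n
    induction n with
    | zero => exact ⟨z, hzmem, hzp, hpz, by rw [pow_one]⟩
    | succ n ih =>
      obtain ⟨w, hwS, hwp, hpw, hpow⟩ := ih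
      refine ⟨z + w - w * z, ?_, ?_, ?_, ?_⟩
      · exact sub_mem (add_mem hzmem hwS) (mul_mem hwS hzmem)
      · rw [sub_mul, add_mul, hzp, hwp, mul_assoc, hzp]
      · rw [mul_sub, mul_add, hpz, hpw, ← mul_assoc, hpw]
      · rw [pow_succ, hpow]
        have hexp : (p - w) * (p - z) = p * p - p * z - w * p + w * z := by noncomm_ring
        rw [hexp, hp2, hpz, hwp]
        abel
  -- take the limit
  have hlim : Filter.Tendsto (fun n : ℕ => p - (p - z) ^ (n + 1)) Filter.atTop (nhds p) := by
    have h0 : Filter.Tendsto (fun n : ℕ => ‖(p - z) ^ (n + 1)‖) Filter.atTop (nhds 0) := by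
      have hb : ∀ n : ℕ, ‖(p - z) ^ (n + 1)‖ ≤ c ^ (n + 1) := by
        intro n
        calc ‖(p - z) ^ (n + 1)‖ ≤ ‖p - z‖ ^ (n + 1) := norm_pow_le' _ (Nat.succ_pos n)
          _ ≤ c ^ (n + 1) := pow_le_pow_left₀ (norm_nonneg _) hynorm _
      have hcpow : Filter.Tendsto (fun n : ℕ => c ^ (n + 1)) Filter.atTop (nhds 0) :=
        (tendsto_pow_atTop_nhds_zero_of_lt_one hc0 hc1).comp (Filter.tendsto_add_atTop_nat 1)
      exact squeeze_zero (fun n => norm_nonneg _) hb hcpow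
    have h1 : Filter.Tendsto (fun n : ℕ => (p - z) ^ (n + 1)) Filter.atTop (nhds 0) := by
      rw [tendsto_zero_iff_norm_tendsto_zero]
      exact h0
    have := Filter.Tendsto.const_sub p h1
    simpa using this
  have hmem : ∀ n : ℕ, p - (p - z) ^ (n + 1) ∈ S := by
    intro n
    obtain ⟨w, hwS, _, _, hpow⟩ := hseq n
    rw [hpow]
    simpa using hwS
  exact hS.mem_of_tendsto hlim (Filter.Eventually.of_forall hmem)

/-- Any `η`-word of length `l` is a generator of `A_l^η`. -/
lemma etaW_mem_ALeta_of_length (T : CTDS A Sρ Sη) {l : ℕ} (L : List Sη) (hL : L.length = l) :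
    etaW T L 1 ∈ ALeta T l := by
  subst hL
  refine StarSubalgebra.le_topologicalClosure _ (StarAlgebra.subset_adjoin ℂ _ ?_)
  exact ⟨L.get, by rw [List.ofFn_get]⟩

lemma etaW_sum (T : CTDS A Sρ Sη) : ∀ (L : List Sη) {ι : Type*} (t : Finset ι) (f : ι → A),
    etaW T L (∑ i ∈ t, f i) = ∑ i ∈ t, etaW T L (f i)
  | [], _, _, _ => rfl
  | a :: L, _, t, f => by
    rw [etaW_cons, map_sum, etaW_sum T L]
    simp [etaW_cons]

/-- The sum of all `η`-words of a given length applied to `1` dominates `1`. -/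
lemma one_le_sum_etaW (T : CTDS A Sρ Sη) :
    ∀ m : ℕ, (1 : A) ≤ ∑ g : Fin m → Sη, etaW T (List.ofFn g) 1
  | 0 => by
    rw [Fintype.sum_unique (fun g : Fin 0 → Sη => etaW T (List.ofFn g) 1)]
    simp [etaW]
  | (m + 1) => by
    have key : ∀ f : Fin (m + 1) → Sη,
        etaW T (List.ofFn f) 1 = etaW T (List.ofFn fun i => f i.succ) (T.es.ρ (f 0) 1) := by
      intro f
      rw [List.ofFn_succ]
      rfl
    calc (1 : A) ≤ ∑ g : Fin m → Sη, etaW T (List.ofFn g) 1 := one_le_sum_etaW T m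
      _ ≤ ∑ g : Fin m → Sη, etaW T (List.ofFn g) (∑ a, T.es.ρ a 1) := by
          refine Finset.sum_le_sum fun g _ => ?_
          rw [← etaH_apply, ← etaH_apply]
          exact map_le_map _ T.es.essential
      _ = ∑ g : Fin m → Sη, ∑ a, etaW T (List.ofFn g) (T.es.ρ a 1) := by
          refine Finset.sum_congr rfl fun g _ => ?_
          exact etaW_sum T _ _ _
      _ = ∑ a, ∑ g : Fin m → Sη, etaW T (List.ofFn g) (T.es.ρ a 1) := Finset.sum_comm
      _ = ∑ p : Sη × (Fin m → Sη), etaW T (List.ofFn p.2) (T.es.ρ p.1 1) := by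
          rw [Fintype.sum_prod_type]
      _ = ∑ f : Fin (m + 1) → Sη, etaW T (List.ofFn f) 1 :=
          (Fintype.sum_equiv (Fin.consEquiv fun _ => Sη).symm _ _ fun f => key f).symm

/-- Shorter `η`-words also belong to `A_l^η`. -/
lemma etaW_short_mem (T : CTDS A Sρ Sη) {l : ℕ} (L : List Sη) (hL : L.length ≤ l) :
    etaW T L 1 ∈ ALeta T l := by
  set w : A := ∑ g : Fin (l - L.length) → Sη, etaW T (List.ofFn g) 1 with hw
  refine corner_mem (StarSubalgebra.isClosed_topologicalClosure _)
    (p := etaW T L 1) (s := etaW T L w) ?_ ?_ ?_ ?_ ?_ ?_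
  · rw [← etaH_apply, ← map_mul, one_mul]
  · rw [← etaH_apply, ← map_star, star_one]
  · rw [← etaH_apply (x := (1:A)), ← etaH_apply (x := w), ← map_mul, one_mul]
  · rw [← etaH_apply (x := (1:A)), ← etaH_apply (x := w), ← map_mul, mul_one]
  · rw [← sub_nonneg, ← etaH_apply (x := (1:A)), ← etaH_apply (x := w), ← map_sub]
    exact map_nonneg_of_nonneg _ (sub_nonneg.2 (one_le_sum_etaW T _))
  · have : etaW T L w = ∑ g : Fin (l - L.length) → Sη, etaW T (List.ofFn g ++ L) 1 := by
      rw [← etaH_apply, hw, map_sum]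
      refine Finset.sum_congr rfl fun g _ => ?_
      rw [etaH_apply, etaW_append]
    rw [this]
    refine sum_mem fun g _ => etaW_mem_ALeta_of_length T _ ?_
    simp [Nat.sub_add_cancel hL]

/-- Moving a `ρ`-word past an `η`-letter using the commutation relations. -/
lemma rho_move (T : CTDS A Sρ Sη) :
    ∀ (ν : List Sρ) (a : Sη) (x : A),
      rhoW T ν (T.es.ρ a x) = 0 ∨
      ∃ (b : Sη) (ν' : List Sρ), ν'.length = ν.length ∧
        rhoW T ν (T.es.ρ a x) = T.es.ρ b (rhoW T ν' x)
  | [], a, x => Or.inr ⟨a, [], rfl, rfl⟩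
  | β :: t, a, x => by
    by_cases h : ∃ y, T.rs.ρ β (T.es.ρ a y) ≠ 0
    · obtain ⟨pp, hpp⟩ := T.κ_bij.2 ⟨(a, β), h⟩
      have hcomm := T.commrel pp x
      rw [hpp] at hcomm
      have hstep : rhoW T (β :: t) (T.es.ρ a x)
          = rhoW T t (T.es.ρ pp.1.2 (T.rs.ρ pp.1.1 x)) := by
        rw [rhoW_cons, ← hcomm]
      rw [hstep]
      rcases rho_move T t pp.1.2 (T.rs.ρ pp.1.1 x) with h0 | ⟨b, ν', hlen, heq⟩
      · exact Or.inl h0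
      · exact Or.inr ⟨b, pp.1.1 :: ν', by simp [hlen], by rw [heq]; rfl⟩
    · push_neg at h
      left
      rw [rhoW_cons, h x, ← rhoH_apply, map_zero]

/-- The main induction: a mixed word `η_ξ(ρ_ν(1))` of total length `≤ l`
belongs to `A_l^η`, provided the system forms squares. -/
lemma mixed_mem (T : CTDS A Sρ Sη) (hsq : ALrho T 1 = ALeta T 1) {l : ℕ} :
    ∀ (m : ℕ) (ν : List Sρ) (ξ : List Sη), ν.length = m → m + ξ.length ≤ l →
      etaW T ξ (rhoW T ν 1) ∈ ALeta T l := by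
  intro m
  induction m with
  | zero =>
    intro ν ξ hν hlen
    obtain rfl : ν = [] := List.length_eq_zero_iff.mp hν
    exact etaW_short_mem T ξ (by simpa using hlen)
  | succ m ih =>
    intro ν ξ hν hlen
    obtain ⟨α, ν₀, rfl⟩ : ∃ α ν₀, ν = α :: ν₀ := by
      cases ν with
      | nil => simp at hν
      | cons α ν₀ => exact ⟨α, ν₀, rfl⟩
    have hν₀ : ν₀.length = m := by simpa using hν
    have hgen : T.rs.ρ α 1 ∈ ALeta T 1 := by
      rw [← hsq]
      refine StarSubalgebra.le_topologicalClosure _ (StarAlgebra.subset_adjoin ℂ _ ?_)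
      exact ⟨fun _ => α, by simp [rhoW]⟩
    have hcont : Continuous fun y : A => etaW T ξ (rhoW T ν₀ y) := by
      have hfn : (fun y : A => etaW T ξ (rhoW T ν₀ y))
          = fun y : A => etaH T ξ (rhoH T ν₀ y) := by
        funext y; rw [etaH_apply, rhoH_apply]
      rw [hfn]
      exact (nusah_continuous _).comp (nusah_continuous _)
    have hsub : ∀ y ∈ StarAlgebra.adjoin ℂ
        {x : A | ∃ ξ' : Fin 1 → Sη, x = etaW T (List.ofFn ξ') 1},
        etaW T ξ (rhoW T ν₀ y) ∈ ALeta T l := by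
      intro y hy
      induction hy using StarAlgebra.adjoin_induction with
      | mem x hx =>
        obtain ⟨f, rfl⟩ := hx
        have hone : etaW T (List.ofFn f) 1 = T.es.ρ (f 0) 1 := by
          simp [etaW]
        rw [hone]
        rcases rho_move T ν₀ (f 0) 1 with h0 | ⟨b, ν', hlen', heq⟩
        · rw [h0, ← etaH_apply, map_zero]
          exact zero_mem _
        · rw [heq]
          have : etaW T ξ (T.es.ρ b (rhoW T ν' 1)) = etaW T (b :: ξ) (rhoW T ν' 1) := rfl
          rw [this]
          refine ih ν' (b :: ξ) (hlen'.trans hν₀) ?_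
          simp only [List.length_cons]
          omega
      | algebraMap r =>
        have : etaW T ξ (rhoW T ν₀ (algebraMap ℂ A r)) = r • etaW T ξ (rhoW T ν₀ 1) := by
          rw [Algebra.algebraMap_eq_smul_one, ← rhoH_apply, map_smul, ← etaH_apply,
            map_smul, etaH_apply, rhoH_apply]
        rw [this]
        exact SMulMemClass.smul_mem r (ih ν₀ ξ hν₀ (by omega))
      | add x y hx hy ihx ihy =>
        have : etaW T ξ (rhoW T ν₀ (x + y))
            = etaW T ξ (rhoW T ν₀ x) + etaW T ξ (rhoW T ν₀ y) := by
          rw [← rhoH_apply, map_add, ← etaH_apply, map_add, etaH_apply, etaH_apply,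
            rhoH_apply, rhoH_apply]
        rw [this]
        exact add_mem ihx ihy
      | mul x y hx hy ihx ihy =>
        have : etaW T ξ (rhoW T ν₀ (x * y))
            = etaW T ξ (rhoW T ν₀ x) * etaW T ξ (rhoW T ν₀ y) := by
          rw [← rhoH_apply, map_mul, ← etaH_apply, map_mul, etaH_apply, etaH_apply,
            rhoH_apply, rhoH_apply]
        rw [this]
        exact mul_mem ihx ihy
      | star x hx ihx =>
        have : etaW T ξ (rhoW T ν₀ (star x)) = star (etaW T ξ (rhoW T ν₀ x)) := by
          rw [← rhoH_apply, map_star, ← etaH_apply, map_star, etaH_apply, rhoH_apply]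
        rw [this]
        exact star_mem ihx
    have hfinal : etaW T ξ (rhoW T ν₀ (T.rs.ρ α 1)) ∈ ALeta T l := by
      have hclosed : IsClosed ((ALeta T l : StarSubalgebra ℂ A) : Set A) :=
        StarSubalgebra.isClosed_topologicalClosure _
      have hmt : Set.MapsTo (fun y : A => etaW T ξ (rhoW T ν₀ y))
          ((StarAlgebra.adjoin ℂ
            {x : A | ∃ ξ' : Fin 1 → Sη, x = etaW T (List.ofFn ξ') 1} : StarSubalgebra ℂ A) : Set A)
          ((ALeta T l : StarSubalgebra ℂ A) : Set A) := fun y hy => hsub y hy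
      have hcl : T.rs.ρ α 1 ∈ closure ((StarAlgebra.adjoin ℂ
          {x : A | ∃ ξ' : Fin 1 → Sη, x = etaW T (List.ofFn ξ') 1} : StarSubalgebra ℂ A) : Set A) :=
        hgen
      have := map_mem_closure hcont hcl hmt
      rwa [hclosed.closure_eq] at this
    exact hfinal

/-- One inclusion. -/
lemma ALrho_le_ALeta (T : CTDS A Sρ Sη) (hsq : ALrho T 1 = ALeta T 1) (l : ℕ) :
    ALrho T l ≤ ALeta T l := by
  rw [ALrho]
  refine StarSubalgebra.topologicalClosure_minimal ?_
    (StarSubalgebra.isClosed_topologicalClosure _)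
  refine StarAlgebra.adjoin_le ?_
  rintro x ⟨μ, rfl⟩
  exact mixed_mem T hsq (List.ofFn μ).length (List.ofFn μ) [] rfl (by simp)

/-- The swapped textile system. -/
noncomputable def swap (T : CTDS A Sρ Sη) : CTDS A Sη Sρ where
  rs := T.es
  es := T.rs
  κ := (Equiv.ofBijective T.κ T.κ_bij).symm
  κ_bij := (Equiv.ofBijective T.κ T.κ_bij).symm.bijective
  commrel := by
    intro q x
    have h := T.commrel ((Equiv.ofBijective T.κ T.κ_bij).symm q) x
    have h2 : T.κ ((Equiv.ofBijective T.κ T.κ_bij).symm q) = q :=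
      (Equiv.ofBijective T.κ T.κ_bij).apply_symm_apply q
    rw [h2] at h
    exact h.symm

lemma swap_ALrho (T : CTDS A Sρ Sη) (l : ℕ) : ALrho (swap T) l = ALeta T l := rfl

lemma swap_ALeta (T : CTDS A Sρ Sη) (l : ℕ) : ALeta (swap T) l = ALrho T l := rfl

end CTDSAux

/-- If the system forms squares, then `A_l^ρ = A_l^η` for every `l ≥ 1`. -/
theorem ALrho_eq_ALeta_of_forms_squares (T : CTDS A Sρ Sη)
    (hsq : ALrho T 1 = ALeta T 1) :
    ∀ l : ℕ, 1 ≤ l → ALrho T l = ALeta T l := by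
  intro l _
  refine le_antisymm (CTDSAux.ALrho_le_ALeta T hsq l) ?_
  have hsq' : ALrho (CTDSAux.swap T) 1 = ALeta (CTDSAux.swap T) 1 := by
    rw [CTDSAux.swap_ALrho, CTDSAux.swap_ALeta]
    exact hsq.symm
  have h := CTDSAux.ALrho_le_ALeta (CTDSAux.swap T) hsq' l
  rwa [CTDSAux.swap_ALrho, CTDSAux.swap_ALeta] at h
end

section
/- Let G be an additive abelian group, let φ, ψ : G → G be additive endomorphisms with φ ∘ ψ = ψ ∘ φ, and let H be a subgroup of G with φ(H) ⊆ H and ψ(H) ⊆ H. Suppose g ∈ H can be written g = (h₁ − φ(h₁)) + (h₂ − ψ(h₂)) with h₁, h₂ ∈ G, and suppose there exist j, k ≥ 0 such that φ^j(ψ^k(h₁)) ∈ H and φ^j(ψ^k(h₂)) ∈ H. Then g ∈ (id − φ)(H) + (id − ψ)(H), the subgroup of H generated by the images of H under id − φ and id − ψ. -/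
/-- Let `φ, ψ` be commuting additive endomorphisms of an abelian group `G`
and `H` a subgroup invariant under both. If `g ∈ H` has the form
`g = (h₁ − φ(h₁)) + (h₂ − ψ(h₂))` with `h₁, h₂ ∈ G` and `φ^j(ψ^k(h₁)), φ^j(ψ^k(h₂)) ∈ H` for
some `j, k ≥ 0`, then `g ∈ (id − φ)(H) + (id − ψ)(H)`. -/
theorem mem_sub_images_of_subgroup {G : Type*} [AddCommGroup G] (φ ψ : G →+ G)
    (hcomm : ∀ x : G, φ (ψ x) = ψ (φ x))
    (H : AddSubgroup G) (hφ : ∀ x ∈ H, φ x ∈ H) (hψ : ∀ x ∈ H, ψ x ∈ H)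
    (g : G) (hg : g ∈ H) (h₁ h₂ : G) (hrep : g = (h₁ - φ h₁) + (h₂ - ψ h₂))
    (j k : ℕ) (h₁mem : (⇑φ)^[j] ((⇑ψ)^[k] h₁) ∈ H) (h₂mem : (⇑φ)^[j] ((⇑ψ)^[k] h₂) ∈ H) :
    g ∈ AddSubgroup.closure
        ({x : G | ∃ h ∈ H, x = h - φ h} ∪ {x : G | ∃ h ∈ H, x = h - ψ h}) := by
  set K := AddSubgroup.closure
      ({x : G | ∃ h ∈ H, x = h - φ h} ∪ {x : G | ∃ h ∈ H, x = h - ψ h}) with hK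
  have hA : ∀ x ∈ H, x - φ x ∈ K := fun x hx =>
    AddSubgroup.subset_closure (Or.inl ⟨x, hx, rfl⟩)
  have hB : ∀ x ∈ H, x - ψ x ∈ K := fun x hx =>
    AddSubgroup.subset_closure (Or.inr ⟨x, hx, rfl⟩)
  -- iterates preserve H
  have hφn : ∀ n, ∀ x ∈ H, (⇑φ)^[n] x ∈ H := by
    intro n
    induction n with
    | zero => intro x hx; simpa using hx
    | succ n ih =>
      intro x hx
      rw [Function.iterate_succ_apply']
      exact hφ _ (ih x hx)
  have hψn : ∀ n, ∀ x ∈ H, (⇑ψ)^[n] x ∈ H := by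
    intro n
    induction n with
    | zero => intro x hx; simpa using hx
    | succ n ih =>
      intro x hx
      rw [Function.iterate_succ_apply']
      exact hψ _ (ih x hx)
  -- commuting of iterates
  have hc : ∀ n x, (⇑φ)^[n] (ψ x) = ψ ((⇑φ)^[n] x) := by
    intro n
    induction n with
    | zero => intro x; simp
    | succ n ih =>
      intro x
      rw [Function.iterate_succ_apply', Function.iterate_succ_apply', ih, hcomm]
  -- telescoping lemmas
  have lem1 : ∀ n, ∀ x ∈ H, x - (⇑φ)^[n] x ∈ K := by
    intro n
    induction n with
    | zero => intro x hx; simpa using zero_mem K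
    | succ n ih =>
      intro x hx
      have : x - (⇑φ)^[n+1] x
          = (x - (⇑φ)^[n] x) + ((⇑φ)^[n] x - φ ((⇑φ)^[n] x)) := by
        rw [Function.iterate_succ_apply']; abel
      rw [this]
      exact add_mem (ih x hx) (hA _ (hφn n x hx))
  have lem2 : ∀ n, ∀ x ∈ H, (⇑φ)^[j] x - (⇑φ)^[j] ((⇑ψ)^[n] x) ∈ K := by
    intro n
    induction n with
    | zero => intro x hx; simpa using zero_mem K
    | succ n ih =>
      intro x hx
      have : (⇑φ)^[j] x - (⇑φ)^[j] ((⇑ψ)^[n+1] x)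
          = ((⇑φ)^[j] x - (⇑φ)^[j] ((⇑ψ)^[n] x))
            + ((⇑φ)^[j] ((⇑ψ)^[n] x) - ψ ((⇑φ)^[j] ((⇑ψ)^[n] x))) := by
        rw [Function.iterate_succ_apply', hc]; abel
      rw [this]
      exact add_mem (ih x hx) (hB _ (hφn j _ (hψn n x hx)))
  -- g - Φ g ∈ K
  have part1 : g - (⇑φ)^[j] ((⇑ψ)^[k] g) ∈ K := by
    have : g - (⇑φ)^[j] ((⇑ψ)^[k] g)
        = (g - (⇑φ)^[j] g) + ((⇑φ)^[j] g - (⇑φ)^[j] ((⇑ψ)^[k] g)) := by abel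
    rw [this]
    exact add_mem (lem1 j g hg) (lem2 k g hg)
  -- Φ g ∈ K
  have part2 : (⇑φ)^[j] ((⇑ψ)^[k] g) ∈ K := by
    set a := (⇑φ)^[j] ((⇑ψ)^[k] h₁) with ha
    set b := (⇑φ)^[j] ((⇑ψ)^[k] h₂) with hb
    have key : (⇑φ)^[j] ((⇑ψ)^[k] g) = (a - φ a) + (b - ψ b) := by
      rw [hrep]
      have hψφ : ∀ n x, (⇑ψ)^[n] (φ x) = φ ((⇑ψ)^[n] x) := by
        intro n
        induction n with
        | zero => intro x; simp
        | succ n ih =>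
          intro x
          rw [Function.iterate_succ_apply', Function.iterate_succ_apply', ih,
            ← hcomm]
      have hφψ' : ∀ n x, (⇑φ)^[n] (ψ x) = ψ ((⇑φ)^[n] x) := hc
      have hψψ : ∀ n x, (⇑ψ)^[n] (ψ x) = ψ ((⇑ψ)^[n] x) := by
        intro n x
        rw [← Function.iterate_succ_apply, Function.iterate_succ_apply']
      have hφφ : ∀ n x, (⇑φ)^[n] (φ x) = φ ((⇑φ)^[n] x) := by
        intro n x
        rw [← Function.iterate_succ_apply, Function.iterate_succ_apply']
      rw [iterate_map_add, iterate_map_add,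
        iterate_map_sub, iterate_map_sub,
        iterate_map_sub, iterate_map_sub,
        hψφ, hφφ, hψψ, hφψ']
    rw [key]
    exact add_mem (hA a h₁mem) (hB b h₂mem)
  have : g = (g - (⇑φ)^[j] ((⇑ψ)^[k] g)) + (⇑φ)^[j] ((⇑ψ)^[k] g) := by abel
  rw [this]
  exact add_mem part1 part2
end

section
/- Let G be an additive abelian group, let φ, ψ : G → G be additive endomorphisms with φ ∘ ψ = ψ ∘ φ, and let H be a subgroup of G with φ(H) ⊆ H and ψ(H) ⊆ H. Assume that for every g ∈ G there exist j, k ≥ 0 with φ^j(ψ^k(g)) ∈ H. Then the inclusion H ↪ G induces a group isomorphism H / ((id − φ)(H) + (id − ψ)(H)) ≅ G / ((id − φ)(G) + (id − ψ)(G)). -/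
/-- Let `φ, ψ` be commuting additive endomorphisms of an abelian group `G`
and `H` a subgroup invariant under both such that every `g ∈ G` satisfies
`φ^j(ψ^k(g)) ∈ H` for some `j, k ≥ 0`. Then the inclusion `H ↪ G` induces an isomorphism
`H/((id−φ)(H) + (id−ψ)(H)) ≅ G/((id−φ)(G) + (id−ψ)(G))`. -/
theorem quotient_iso_of_eventually_in_subgroup {G : Type*} [AddCommGroup G] (φ ψ : G →+ G)
    (hcomm : ∀ x : G, φ (ψ x) = ψ (φ x))
    (H : AddSubgroup G) (hφ : ∀ x ∈ H, φ x ∈ H) (hψ : ∀ x ∈ H, ψ x ∈ H)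
    (habs : ∀ g : G, ∃ j k : ℕ, (⇑φ)^[j] ((⇑ψ)^[k] g) ∈ H) :
    ∃ e : (H ⧸ (AddSubgroup.closure
            {x : H | (∃ y : H, (x : G) = (y : G) - φ y) ∨
                     (∃ y : H, (x : G) = (y : G) - ψ y)})) ≃+
          (G ⧸ (AddSubgroup.closure
            {x : G | (∃ y : G, x = y - φ y) ∨ (∃ y : G, x = y - ψ y)})),
      ∀ h : H, e (QuotientAddGroup.mk h) = QuotientAddGroup.mk (h : G) := by
  classical
  set SH : Set H := {x : H | (∃ y : H, (x : G) = (y : G) - φ y) ∨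
                     (∃ y : H, (x : G) = (y : G) - ψ y)} with hSHdef
  set SG : Set G := {x : G | (∃ y : G, x = y - φ y) ∨ (∃ y : G, x = y - ψ y)} with hSGdef
  set NH : AddSubgroup H := AddSubgroup.closure SH with hNHdef
  set NG : AddSubgroup G := AddSubgroup.closure SG with hNGdef
  -- commutation of iterates
  have hcomm' : Function.Commute ⇑φ ⇑ψ := hcomm
  have hC : ∀ (a b : ℕ) (x : G), (⇑φ)^[a] ((⇑ψ)^[b] x) = (⇑ψ)^[b] ((⇑φ)^[a] x) :=
    fun a b => (hcomm'.iterate_left a).iterate_right b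
  -- membership of iterates
  have memψ : ∀ (k : ℕ) (x : G), x ∈ H → (⇑ψ)^[k] x ∈ H := by
    intro k
    induction k with
    | zero => intro x hx; simpa using hx
    | succ k ih =>
      intro x hx
      rw [Function.iterate_succ_apply']
      exact hψ _ (ih x hx)
  have memφ : ∀ (j : ℕ) (x : G), x ∈ H → (⇑φ)^[j] x ∈ H := by
    intro j
    induction j with
    | zero => intro x hx; simpa using hx
    | succ j ih =>
      intro x hx
      rw [Function.iterate_succ_apply']
      exact hφ _ (ih x hx)
  have memH : ∀ (j k : ℕ) (x : G), x ∈ H → (⇑φ)^[j] ((⇑ψ)^[k] x) ∈ H :=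
    fun j k x hx => memφ j _ (memψ k x hx)
  -- classes in H ⧸ NH are invariant under φ and ψ
  have hmkφ : ∀ (x : G) (hx : x ∈ H),
      (QuotientAddGroup.mk (⟨φ x, hφ x hx⟩ : H) : H ⧸ NH)
        = QuotientAddGroup.mk ⟨x, hx⟩ := by
    intro x hx
    have : ((⟨φ x, hφ x hx⟩ : H) - ⟨x, hx⟩) ∈ NH := by
      have h1 : ((⟨x, hx⟩ : H) - ⟨φ x, hφ x hx⟩) ∈ SH := by
        exact Or.inl ⟨⟨x, hx⟩, by simp⟩
      have h2 : ((⟨x, hx⟩ : H) - ⟨φ x, hφ x hx⟩) ∈ NH := AddSubgroup.subset_closure h1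
      simpa using NH.neg_mem h2
    exact (QuotientAddGroup.eq_iff_sub_mem).2 this
  have hmkψ : ∀ (x : G) (hx : x ∈ H),
      (QuotientAddGroup.mk (⟨ψ x, hψ x hx⟩ : H) : H ⧸ NH)
        = QuotientAddGroup.mk ⟨x, hx⟩ := by
    intro x hx
    have : ((⟨ψ x, hψ x hx⟩ : H) - ⟨x, hx⟩) ∈ NH := by
      have h1 : ((⟨x, hx⟩ : H) - ⟨ψ x, hψ x hx⟩) ∈ SH := by
        exact Or.inr ⟨⟨x, hx⟩, by simp⟩
      have h2 : ((⟨x, hx⟩ : H) - ⟨ψ x, hψ x hx⟩) ∈ NH := AddSubgroup.subset_closure h1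
      simpa using NH.neg_mem h2
    exact (QuotientAddGroup.eq_iff_sub_mem).2 this
  have hmkψit : ∀ (k : ℕ) (x : G) (hx : x ∈ H),
      (QuotientAddGroup.mk (⟨(⇑ψ)^[k] x, memψ k x hx⟩ : H) : H ⧸ NH)
        = QuotientAddGroup.mk ⟨x, hx⟩ := by
    intro k
    induction k with
    | zero => intro x hx; rfl
    | succ k ih =>
      intro x hx
      have e1 : (⇑ψ)^[k+1] x = ψ ((⇑ψ)^[k] x) := Function.iterate_succ_apply' _ _ _
      have : (⟨(⇑ψ)^[k+1] x, memψ (k+1) x hx⟩ : H)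
          = ⟨ψ ((⇑ψ)^[k] x), hψ _ (memψ k x hx)⟩ := Subtype.ext e1
      rw [this, hmkψ _ (memψ k x hx), ih x hx]
  have hmkφit : ∀ (j : ℕ) (x : G) (hx : x ∈ H),
      (QuotientAddGroup.mk (⟨(⇑φ)^[j] x, memφ j x hx⟩ : H) : H ⧸ NH)
        = QuotientAddGroup.mk ⟨x, hx⟩ := by
    intro j
    induction j with
    | zero => intro x hx; rfl
    | succ j ih =>
      intro x hx
      have e1 : (⇑φ)^[j+1] x = φ ((⇑φ)^[j] x) := Function.iterate_succ_apply' _ _ _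
      have : (⟨(⇑φ)^[j+1] x, memφ (j+1) x hx⟩ : H)
          = ⟨φ ((⇑φ)^[j] x), hφ _ (memφ j x hx)⟩ := Subtype.ext e1
      rw [this, hmkφ _ (memφ j x hx), ih x hx]
  have hmkit : ∀ (j k : ℕ) (x : G) (hx : x ∈ H),
      (QuotientAddGroup.mk (⟨(⇑φ)^[j] ((⇑ψ)^[k] x), memH j k x hx⟩ : H) : H ⧸ NH)
        = QuotientAddGroup.mk ⟨x, hx⟩ := by
    intro j k x hx
    rw [hmkφit j _ (memψ k x hx), hmkψit k x hx]
  -- monotone step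
  have hmono : ∀ (g : G) (j k a b : ℕ) (h1 : (⇑φ)^[j] ((⇑ψ)^[k] g) ∈ H),
      ∃ h2 : (⇑φ)^[j+a] ((⇑ψ)^[k+b] g) ∈ H,
        (QuotientAddGroup.mk (⟨(⇑φ)^[j+a] ((⇑ψ)^[k+b] g), h2⟩ : H) : H ⧸ NH)
          = QuotientAddGroup.mk ⟨(⇑φ)^[j] ((⇑ψ)^[k] g), h1⟩ := by
    intro g j k a b h1
    have key : (⇑φ)^[j+a] ((⇑ψ)^[k+b] g)
        = (⇑φ)^[a] ((⇑ψ)^[b] ((⇑φ)^[j] ((⇑ψ)^[k] g))) := by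
      conv_rhs => rw [← hC j b, ← Function.iterate_add_apply ⇑ψ b k,
        ← Function.iterate_add_apply ⇑φ a j]
      rw [Nat.add_comm j a, Nat.add_comm k b]
    have h2 : (⇑φ)^[j+a] ((⇑ψ)^[k+b] g) ∈ H := by
      rw [key]; exact memH a b _ h1
    refine ⟨h2, ?_⟩
    have : (⟨(⇑φ)^[j+a] ((⇑ψ)^[k+b] g), h2⟩ : H)
        = ⟨(⇑φ)^[a] ((⇑ψ)^[b] ((⇑φ)^[j] ((⇑ψ)^[k] g))), memH a b _ h1⟩ := Subtype.ext key
    rw [this, hmkit a b _ h1]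
  -- independence of the chosen exponents
  have hindep : ∀ (g : G) (j k j' k' : ℕ) (h1 : (⇑φ)^[j] ((⇑ψ)^[k] g) ∈ H)
      (h2 : (⇑φ)^[j'] ((⇑ψ)^[k'] g) ∈ H),
      (QuotientAddGroup.mk (⟨(⇑φ)^[j] ((⇑ψ)^[k] g), h1⟩ : H) : H ⧸ NH)
        = QuotientAddGroup.mk ⟨(⇑φ)^[j'] ((⇑ψ)^[k'] g), h2⟩ := by
    intro g j k j' k' h1 h2
    obtain ⟨m1, e1⟩ := hmono g j k j' k' h1
    obtain ⟨m2, e2⟩ := hmono g j' k' j k h2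
    have hval : (⟨(⇑φ)^[j+j'] ((⇑ψ)^[k+k'] g), m1⟩ : H)
        = ⟨(⇑φ)^[j'+j] ((⇑ψ)^[k'+k] g), m2⟩ := by
      apply Subtype.ext
      show (⇑φ)^[j+j'] ((⇑ψ)^[k+k'] g) = (⇑φ)^[j'+j] ((⇑ψ)^[k'+k] g)
      rw [Nat.add_comm j j', Nat.add_comm k k']
    exact e1.symm.trans ((congrArg _ hval).trans e2)
  -- the retraction r
  let r : G → H ⧸ NH := fun g =>
    QuotientAddGroup.mk ⟨(⇑φ)^[(habs g).choose] ((⇑ψ)^[(habs g).choose_spec.choose] g),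
      (habs g).choose_spec.choose_spec⟩
  have r_spec : ∀ (g : G) (j k : ℕ) (h : (⇑φ)^[j] ((⇑ψ)^[k] g) ∈ H),
      r g = QuotientAddGroup.mk ⟨(⇑φ)^[j] ((⇑ψ)^[k] g), h⟩ :=
    fun g j k h => hindep g _ _ j k _ h
  have r_add : ∀ a b : G, r (a + b) = r a + r b := by
    intro a b
    obtain ⟨j, k, ha⟩ := habs a
    obtain ⟨j', k', hb⟩ := habs b
    obtain ⟨ha', _⟩ := hmono a j k j' k' ha
    obtain ⟨hb', _⟩ := hmono b j' k' j k hb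
    have hb'' : (⇑φ)^[j+j'] ((⇑ψ)^[k+k'] b) ∈ H := by
      rwa [Nat.add_comm j j', Nat.add_comm k k']
    have hsum : (⇑φ)^[j+j'] ((⇑ψ)^[k+k'] (a + b))
        = (⇑φ)^[j+j'] ((⇑ψ)^[k+k'] a) + (⇑φ)^[j+j'] ((⇑ψ)^[k+k'] b) := by
      rw [iterate_map_add, iterate_map_add]
    have hmem : (⇑φ)^[j+j'] ((⇑ψ)^[k+k'] (a + b)) ∈ H := by
      rw [hsum]; exact H.add_mem ha' hb''
    rw [r_spec (a+b) (j+j') (k+k') hmem, r_spec a (j+j') (k+k') ha',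
      r_spec b (j+j') (k+k') hb'']
    rw [← QuotientAddGroup.mk_add]
    congr 1
    exact Subtype.ext hsum
  let rhom : G →+ H ⧸ NH := AddMonoidHom.mk' r r_add
  -- r kills the generators of NG
  have r_gen : ∀ x ∈ SG, rhom x = 0 := by
    intro x hx
    rcases hx with ⟨y, hy⟩ | ⟨y, hy⟩
    · obtain ⟨j, k, hm⟩ := habs y
      have hb : (⇑φ)^[j] ((⇑ψ)^[k] y) ∈ H := hm
      set b : G := (⇑φ)^[j] ((⇑ψ)^[k] y) with hbdef
      have key : (⇑φ)^[j] ((⇑ψ)^[k] x) = b - φ b := by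
        have e1 : (⇑ψ)^[k] (φ y) = φ ((⇑ψ)^[k] y) := (hcomm'.symm.iterate_left k) y
        have e2 : (⇑φ)^[j] (φ ((⇑ψ)^[k] y)) = φ ((⇑φ)^[j] ((⇑ψ)^[k] y)) :=
          ((Function.Commute.refl ⇑φ).iterate_left j) ((⇑ψ)^[k] y)
        rw [hy, iterate_map_sub, iterate_map_sub, e1, e2]
      have hmem : (⇑φ)^[j] ((⇑ψ)^[k] x) ∈ H := by
        rw [key]; exact H.sub_mem hb (hφ _ hb)
      have : rhom x = QuotientAddGroup.mk ⟨(⇑φ)^[j] ((⇑ψ)^[k] x), hmem⟩ :=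
        r_spec x j k hmem
      rw [this]
      rw [QuotientAddGroup.eq_zero_iff]
      exact AddSubgroup.subset_closure (Or.inl ⟨⟨b, hb⟩, by simpa using key⟩)
    · obtain ⟨j, k, hm⟩ := habs y
      have hb : (⇑φ)^[j] ((⇑ψ)^[k] y) ∈ H := hm
      set b : G := (⇑φ)^[j] ((⇑ψ)^[k] y) with hbdef
      have key : (⇑φ)^[j] ((⇑ψ)^[k] x) = b - ψ b := by
        have e1 : (⇑ψ)^[k] (ψ y) = ψ ((⇑ψ)^[k] y) :=
          ((Function.Commute.refl ⇑ψ).iterate_left k) y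
        have e2 : (⇑φ)^[j] (ψ ((⇑ψ)^[k] y)) = ψ ((⇑φ)^[j] ((⇑ψ)^[k] y)) :=
          (hcomm'.iterate_left j) ((⇑ψ)^[k] y)
        rw [hy, iterate_map_sub, iterate_map_sub, e1, e2]
      have hmem : (⇑φ)^[j] ((⇑ψ)^[k] x) ∈ H := by
        rw [key]; exact H.sub_mem hb (hψ _ hb)
      have : rhom x = QuotientAddGroup.mk ⟨(⇑φ)^[j] ((⇑ψ)^[k] x), hmem⟩ :=
        r_spec x j k hmem
      rw [this]
      rw [QuotientAddGroup.eq_zero_iff]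
      exact AddSubgroup.subset_closure (Or.inr ⟨⟨b, hb⟩, by simpa using key⟩)
  have hNGker : NG ≤ rhom.ker := by
    rw [hNGdef]
    exact (AddSubgroup.closure_le _).2 fun x hx => r_gen x hx
  let rbar : G ⧸ NG →+ H ⧸ NH := QuotientAddGroup.lift NG rhom hNGker
  -- forward map
  let fhom : H →+ G ⧸ NG := (QuotientAddGroup.mk' NG).comp H.subtype
  have hNHker : NH ≤ fhom.ker := by
    rw [hNHdef]
    refine (AddSubgroup.closure_le _).2 fun x hx => ?_
    have : (x : G) ∈ SG := by
      rcases hx with ⟨y, hy⟩ | ⟨y, hy⟩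
      · exact Or.inl ⟨(y : G), hy⟩
      · exact Or.inr ⟨(y : G), hy⟩
    show QuotientAddGroup.mk (x : G) = 0
    rw [QuotientAddGroup.eq_zero_iff]
    exact AddSubgroup.subset_closure this
  let f : H ⧸ NH →+ G ⧸ NG := QuotientAddGroup.lift NH fhom hNHker
  -- classes in G ⧸ NG are invariant under φ, ψ
  have hmkGφ : ∀ x : G, (QuotientAddGroup.mk (φ x) : G ⧸ NG) = QuotientAddGroup.mk x := by
    intro x
    refine (QuotientAddGroup.eq_iff_sub_mem).2 ?_
    have h1 : x - φ x ∈ SG := Or.inl ⟨x, rfl⟩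
    simpa using NG.neg_mem (AddSubgroup.subset_closure h1)
  have hmkGψ : ∀ x : G, (QuotientAddGroup.mk (ψ x) : G ⧸ NG) = QuotientAddGroup.mk x := by
    intro x
    refine (QuotientAddGroup.eq_iff_sub_mem).2 ?_
    have h1 : x - ψ x ∈ SG := Or.inr ⟨x, rfl⟩
    simpa using NG.neg_mem (AddSubgroup.subset_closure h1)
  have hmkGφit : ∀ (j : ℕ) (x : G),
      (QuotientAddGroup.mk ((⇑φ)^[j] x) : G ⧸ NG) = QuotientAddGroup.mk x := by
    intro j
    induction j with
    | zero => intro x; rfl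
    | succ j ih =>
      intro x
      rw [Function.iterate_succ_apply', hmkGφ, ih]
  have hmkGψit : ∀ (k : ℕ) (x : G),
      (QuotientAddGroup.mk ((⇑ψ)^[k] x) : G ⧸ NG) = QuotientAddGroup.mk x := by
    intro k
    induction k with
    | zero => intro x; rfl
    | succ k ih =>
      intro x
      rw [Function.iterate_succ_apply', hmkGψ, ih]
  -- f on mk
  have f_mk : ∀ h : H, f (QuotientAddGroup.mk h) = QuotientAddGroup.mk (h : G) := fun h => rfl
  have rbar_mk : ∀ g : G, rbar (QuotientAddGroup.mk g) = r g := fun g => rfl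
  -- inverses
  have left_inv : ∀ q : H ⧸ NH, rbar (f q) = q := by
    intro q
    induction q using QuotientAddGroup.induction_on with
    | H h =>
      rw [f_mk, rbar_mk]
      have : r (h : G) = QuotientAddGroup.mk ⟨(⇑φ)^[0] ((⇑ψ)^[0] (h : G)), by simp only [Function.iterate_zero, id_eq]; exact h.2⟩ :=
        r_spec (h : G) 0 0 (by simp only [Function.iterate_zero, id_eq]; exact h.2)
      rw [this]
      congr 1
  have right_inv : ∀ q : G ⧸ NG, f (rbar q) = q := by
    intro q
    induction q using QuotientAddGroup.induction_on with
    | H g =>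
      rw [rbar_mk]
      obtain ⟨j, k, hm⟩ := habs g
      rw [r_spec g j k hm, f_mk]
      show (QuotientAddGroup.mk ((⇑φ)^[j] ((⇑ψ)^[k] g)) : G ⧸ NG) = QuotientAddGroup.mk g
      rw [hmkGφit, hmkGψit]
  refine ⟨{ toFun := f, invFun := rbar, left_inv := left_inv, right_inv := right_inv,
            map_add' := f.map_add }, fun h => ?_⟩
  exact f_mk h
end
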